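/- (Hyperbolic decomposition of the wave operator for the Klein–Gordon L^∞ estimate.) Let w be a C² function on K, and let 𝒟 denote the first-order operator 𝒟 := (s/t)∂_t + (x^a/s)∂̲_a (sum over a = 1,2), acting on functions of (t,x). Then for every (t,x) ∈ K: s^{−1}·𝒟(𝒟(s·w))(t,x) = □w(t,x) + S₁[w](t,x), where s·w denotes the function (t,x) ↦ √(t²−|x|²)·w(t,x), and S₁[w] := Σ_a ∂̲_a∂̲_a w + (x^a x^b/s²) ∂̲_a∂̲_b w + (2x^a/s²) ∂̲_a w. -/

import Mathlib

noncomputable section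

open Real MeasureTheory

abbrev Pt := ℝ × ℝ × ℝ

def tc (p : Pt) : ℝ := p.1

def rad (p : Pt) : ℝ := Real.sqrt (p.2.1 ^ 2 + p.2.2 ^ 2)

def sv (p : Pt) : ℝ := Real.sqrt (tc p ^ 2 - rad p ^ 2)

def dir (α : Fin 3) : Pt := if α = 0 then (1, 0, 0) else if α = 1 then (0, 1, 0) else (0, 0, 1)

def xc (a : Fin 2) (p : Pt) : ℝ := if a = 0 then p.2.1 else p.2.2

def pd (α : Fin 3) (u : Pt → ℝ) : Pt → ℝ := fun p => fderiv ℝ u p (dir α)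

def Lb (a : Fin 2) (u : Pt → ℝ) : Pt → ℝ := fun p => xc a p * pd 0 u p + tc p * pd a.succ u p

def pdu (a : Fin 2) (u : Pt → ℝ) : Pt → ℝ := fun p => (xc a p / tc p) * pd 0 u p + pd a.succ u p

def Box (u : Pt → ℝ) : Pt → ℝ := fun p => pd 0 (pd 0 u) p - pd 1 (pd 1 u) p - pd 2 (pd 2 u) p

def Kset : Set Pt := {p | rad p + 1 < tc p}

def Kslab (s0 s1 : ℝ) : Set Pt :=
  {p | p ∈ Kset ∧ Real.sqrt (s0 ^ 2 + rad p ^ 2) ≤ tc p ∧ tc p ≤ Real.sqrt (s1 ^ 2 + rad p ^ 2)}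

def Hyp (σ : ℝ) : Set Pt := {p | tc p = Real.sqrt (σ ^ 2 + rad p ^ 2)}

def L2H (σ : ℝ) (u : Pt → ℝ) : ℝ :=
  Real.sqrt (∫ y : ℝ × ℝ, (u (Real.sqrt (σ ^ 2 + y.1 ^ 2 + y.2 ^ 2), y)) ^ 2)

def pdI : List (Fin 3) → (Pt → ℝ) → Pt → ℝ
  | [], u => u
  | α :: I, u => pd α (pdI I u)

def LbJ : List (Fin 2) → (Pt → ℝ) → Pt → ℝ
  | [], u => u
  | a :: J, u => Lb a (LbJ J u)

/-- The hyperbolic derivative operator `𝒟 := (s/t)∂_t + (x^a/s)∂̲_a`. -/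
def calD (u : Pt → ℝ) : Pt → ℝ :=
  fun p => (sv p / tc p) * pd 0 u p + ∑ a : Fin 2, (xc a p / sv p) * pdu a u p

/-- The operator `S₁[w] := Σ_a ∂̲_a∂̲_a w + (x^a x^b/s²)∂̲_a∂̲_b w + (2x^a/s²)∂̲_a w`. -/
def S1op (w : Pt → ℝ) : Pt → ℝ :=
  fun p => (∑ a : Fin 2, pdu a (pdu a w) p)
    + (∑ a : Fin 2, ∑ b : Fin 2, (xc a p * xc b p / sv p ^ 2) * pdu a (pdu b w) p)
    + (∑ a : Fin 2, (2 * xc a p / sv p ^ 2) * pdu a w p)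

lemma radsq (p : Pt) : rad p ^ 2 = p.2.1 ^ 2 + p.2.2 ^ 2 :=
  Real.sq_sqrt (by positivity)

lemma sv_eq : sv = fun p : Pt => Real.sqrt (p.1 ^ 2 - (p.2.1 ^ 2 + p.2.2 ^ 2)) := by
  funext p
  simp [sv, tc, radsq p]

lemma isOpen_Kset : IsOpen Kset := by
  have h : Continuous fun p : Pt => rad p + 1 :=
    ((Real.continuous_sqrt.comp (by fun_prop)).add continuous_const)
  exact isOpen_lt h continuous_fst

lemma Kmem (hp : p ∈ Kset) : 1 < tc p ∧ p.2.1 ^ 2 + p.2.2 ^ 2 < tc p ^ 2 := by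
  have h0 : 0 ≤ rad p := Real.sqrt_nonneg _
  have h1 : rad p + 1 < tc p := hp
  constructor
  · linarith
  · have : rad p ^ 2 < tc p ^ 2 := by nlinarith
    rwa [radsq] at this

lemma sv_pos (hp : p ∈ Kset) : 0 < sv p := by
  rw [sv_eq]
  have := (Kmem hp).2
  exact Real.sqrt_pos.2 (by simp [tc] at this ⊢; linarith)

lemma sv_sq (hp : p ∈ Kset) : sv p ^ 2 = tc p ^ 2 - (p.2.1 ^ 2 + p.2.2 ^ 2) := by
  rw [sv_eq]
  have := (Kmem hp).2
  exact Real.sq_sqrt (by simp [tc] at this ⊢; linarith)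

section deriv
variable {p : Pt} {u v : Pt → ℝ} {α : Fin 3}

lemma pd_congr (h : u =ᶠ[nhds p] v) (α : Fin 3) : pd α u p = pd α v p := by
  simp [pd, h.fderiv_eq]

lemma pd_add (hu : DifferentiableAt ℝ u p) (hv : DifferentiableAt ℝ v p) (α : Fin 3) :
    pd α (fun q => u q + v q) p = pd α u p + pd α v p := by
  simp [pd, fderiv_fun_add hu hv]

lemma pd_mul (hu : DifferentiableAt ℝ u p) (hv : DifferentiableAt ℝ v p) (α : Fin 3) :
    pd α (fun q => u q * v q) p = pd α u p * v p + u p * pd α v p := by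
  simp [pd, fderiv_fun_mul hu hv]; ring

lemma diff_tc : DifferentiableAt ℝ tc p := differentiableAt_fst

lemma pd_tc (α : Fin 3) : pd α tc p = (dir α).1 := by
  rw [pd, show fderiv ℝ tc p = ContinuousLinearMap.fst ℝ ℝ (ℝ × ℝ) from fderiv_fst]
  rfl

lemma hasFDerivAt_xc (a : Fin 2) :
    HasFDerivAt (xc a) ((if a = 0 then (ContinuousLinearMap.fst ℝ ℝ ℝ) else
      (ContinuousLinearMap.snd ℝ ℝ ℝ)).comp (ContinuousLinearMap.snd ℝ ℝ (ℝ × ℝ))) p := by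
  fin_cases a
  · exact (hasFDerivAt_fst.comp p (hasFDerivAt_snd (𝕜 := ℝ) (p := p)))
  · exact (hasFDerivAt_snd.comp p (hasFDerivAt_snd (𝕜 := ℝ) (p := p)))

lemma diff_xc (a : Fin 2) : DifferentiableAt ℝ (xc a) p :=
  (hasFDerivAt_xc a).differentiableAt

lemma pd_xc (a : Fin 2) (α : Fin 3) :
    pd α (xc a) p = (if a = 0 then (dir α).2.1 else (dir α).2.2) := by
  rw [pd, (hasFDerivAt_xc a).fderiv]
  fin_cases a <;> simp

private abbrev Fc : Pt →L[ℝ] ℝ := ContinuousLinearMap.fst ℝ ℝ (ℝ × ℝ)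
private abbrev C1 : Pt →L[ℝ] ℝ :=
  (ContinuousLinearMap.fst ℝ ℝ ℝ).comp (ContinuousLinearMap.snd ℝ ℝ (ℝ × ℝ))
private abbrev C2 : Pt →L[ℝ] ℝ :=
  (ContinuousLinearMap.snd ℝ ℝ ℝ).comp (ContinuousLinearMap.snd ℝ ℝ (ℝ × ℝ))

lemma hasFDerivAt_sv (hp : p ∈ Kset) :
    HasFDerivAt sv ((1 / (2 * sv p)) •
      ((p.1 • Fc + p.1 • Fc) - ((p.2.1 • C1 + p.2.1 • C1) + (p.2.2 • C2 + p.2.2 • C2)))) p := by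
  have h1 : HasFDerivAt (fun q : Pt => q.1 ^ 2) (p.1 • Fc + p.1 • Fc) p := by
    simpa [sq] using (hasFDerivAt_fst (p := p)).fun_mul (hasFDerivAt_fst (p := p))
  have h2 : HasFDerivAt (fun q : Pt => q.2.1 ^ 2) (p.2.1 • C1 + p.2.1 • C1) p := by
    simpa [sq] using (hasFDerivAt_fst.comp p (hasFDerivAt_snd (𝕜 := ℝ) (p := p))).fun_mul
      (hasFDerivAt_fst.comp p (hasFDerivAt_snd (𝕜 := ℝ) (p := p)))
  have h3 : HasFDerivAt (fun q : Pt => q.2.2 ^ 2) (p.2.2 • C2 + p.2.2 • C2) p := by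
    simpa [sq] using (hasFDerivAt_snd.comp p (hasFDerivAt_snd (𝕜 := ℝ) (p := p))).fun_mul
      (hasFDerivAt_snd.comp p (hasFDerivAt_snd (𝕜 := ℝ) (p := p)))
  have hf : HasFDerivAt (fun q : Pt => q.1 ^ 2 - (q.2.1 ^ 2 + q.2.2 ^ 2)) _ p :=
    h1.sub (h2.add h3)
  have hne : p.1 ^ 2 - (p.2.1 ^ 2 + p.2.2 ^ 2) ≠ 0 := by
    have := (Kmem hp).2; simp only [tc] at this; nlinarith
  have h := (Real.hasDerivAt_sqrt hne).comp_hasFDerivAt p hf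
  simp only [sv_eq]
  exact h

lemma diff_sv (hp : p ∈ Kset) : DifferentiableAt ℝ sv p := (hasFDerivAt_sv hp).differentiableAt

lemma pd_sv (hp : p ∈ Kset) (α : Fin 3) :
    pd α sv p = (tc p * (dir α).1 - p.2.1 * (dir α).2.1 - p.2.2 * (dir α).2.2) / sv p := by
  have hs := (sv_pos hp).ne'
  rw [pd, (hasFDerivAt_sv hp).fderiv]
  simp [tc]
  field_simp
  ring

end deriv

section w2
variable {w u : Pt → ℝ} {p q : Pt}

lemma hwAt (hw : ContDiffOn ℝ 2 w Kset) (hp : p ∈ Kset) : ContDiffAt ℝ 2 w p :=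
  hw.contDiffAt (isOpen_Kset.mem_nhds hp)

lemma diff_w (hw : ContDiffOn ℝ 2 w Kset) (hp : p ∈ Kset) : DifferentiableAt ℝ w p :=
  (hwAt hw hp).differentiableAt two_ne_zero

lemma diff_fderiv (hw : ContDiffOn ℝ 2 w Kset) (hp : p ∈ Kset) :
    DifferentiableAt ℝ (fderiv ℝ w) p :=
  ((hwAt hw hp).fderiv_right (le_refl 2)).differentiableAt one_ne_zero

lemma diff_pd (hw : ContDiffOn ℝ 2 w Kset) (hp : p ∈ Kset) (β : Fin 3) :
    DifferentiableAt ℝ (pd β w) p :=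
  (diff_fderiv hw hp).clm_apply (differentiableAt_const _)

lemma pd_pd (hw : ContDiffOn ℝ 2 w Kset) (hp : p ∈ Kset) (α β : Fin 3) :
    pd α (pd β w) p = fderiv ℝ (fderiv ℝ w) p (dir α) (dir β) := by
  have : pd β w = fun q => (fderiv ℝ w q) (dir β) := rfl
  rw [pd, this, fderiv_clm_apply (diff_fderiv hw hp) (differentiableAt_const _)]
  simp

lemma pd_symm (hw : ContDiffOn ℝ 2 w Kset) (hp : p ∈ Kset) (α β : Fin 3) :
    pd α (pd β w) p = pd β (pd α w) p := by
  rw [pd_pd hw hp, pd_pd hw hp]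
  exact (hwAt hw hp).isSymmSndFDerivAt (by norm_num) _ _

lemma calD_val (u : Pt → ℝ) (hq : q ∈ Kset) :
    calD u q = (sv q)⁻¹ *
      (tc q * pd 0 u q + q.2.1 * pd 1 u q + q.2.2 * pd 2 u q) := by
  have ht : tc q ≠ 0 := by have := (Kmem hq).1; linarith
  have hs := (sv_pos hq).ne'
  have h2 := sv_sq hq
  simp only [calD, pdu, Fin.sum_univ_two, xc, Fin.succ_zero_eq_one, Fin.succ_one_eq_two,
    if_pos rfl, if_neg (by decide : ¬(1 : Fin 2) = 0), if_true]
  field_simp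
  linear_combination pd 0 u q * h2

end w2

section w3
variable {w u : Pt → ℝ} {p q : Pt}

lemma dir0 : dir 0 = ((1 : ℝ), (0 : ℝ), (0 : ℝ)) := rfl
lemma dir1 : dir 1 = ((0 : ℝ), (1 : ℝ), (0 : ℝ)) := rfl
lemma dir2 : dir 2 = ((0 : ℝ), (0 : ℝ), (1 : ℝ)) := rfl

lemma calD_g (hw : ContDiffOn ℝ 2 w Kset) (hq : q ∈ Kset) :
    calD (fun r => sv r * w r) q
      = w q + (tc q * pd 0 w q + (q.2.1 * pd 1 w q + q.2.2 * pd 2 w q)) := by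
  have ht : tc q ≠ 0 := by have := (Kmem hq).1; linarith
  have hs := (sv_pos hq).ne'
  have h2 := sv_sq hq
  rw [calD_val _ hq, pd_mul (diff_sv hq) (diff_w hw hq) 0, pd_mul (diff_sv hq) (diff_w hw hq) 1,
      pd_mul (diff_sv hq) (diff_w hw hq) 2, pd_sv hq 0, pd_sv hq 1, pd_sv hq 2, dir0, dir1, dir2]
  simp only [tc] at h2 ⊢
  field_simp
  linear_combination (-(w q)) * h2

lemma hasFDerivAt_invtc (ht : tc p ≠ 0) :
    HasFDerivAt (fun q : Pt => (tc q)⁻¹) ((-((tc p) ^ 2)⁻¹) • Fc) p :=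
  (hasDerivAt_inv ht).comp_hasFDerivAt p hasFDerivAt_fst

lemma diff_invtc (ht : tc p ≠ 0) : DifferentiableAt ℝ (fun q : Pt => (tc q)⁻¹) p :=
  (hasFDerivAt_invtc ht).differentiableAt

lemma pd_invtc (ht : tc p ≠ 0) (α : Fin 3) :
    pd α (fun q : Pt => (tc q)⁻¹) p = -(dir α).1 / tc p ^ 2 := by
  rw [pd, (hasFDerivAt_invtc ht).fderiv]
  simp
  try ring

lemma pd_pdu (hw : ContDiffOn ℝ 2 w Kset) (hp : p ∈ Kset) (b : Fin 2) (α : Fin 3) :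
    pd α (pdu b w) p
      = ((if b = 0 then (dir α).2.1 else (dir α).2.2) * (tc p)⁻¹
          + xc b p * (-(dir α).1 / tc p ^ 2)) * pd 0 w p
        + (xc b p / tc p) * pd α (pd 0 w) p + pd α (pd b.succ w) p := by
  have ht : tc p ≠ 0 := by have := (Kmem hp).1; linarith
  have hfun : pdu b w = fun q => (xc b q * (tc q)⁻¹) * pd 0 w q + pd b.succ w q := by
    funext r; simp [pdu, div_eq_mul_inv]
  rw [hfun,
    pd_add (((diff_xc b).fun_mul (diff_invtc ht)).fun_mul (diff_pd hw hp 0)) (diff_pd hw hp _),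
    pd_mul ((diff_xc b).fun_mul (diff_invtc ht)) (diff_pd hw hp 0),
    pd_mul (diff_xc b) (diff_invtc ht), pd_xc, pd_invtc ht]
  field_simp
  try ring

end w3

section main
variable {w : Pt → ℝ} {p : Pt}

lemma hasFDerivAt_x1 : HasFDerivAt (fun q : Pt => q.2.1) C1 p :=
  hasFDerivAt_fst.comp p hasFDerivAt_snd

lemma hasFDerivAt_x2 : HasFDerivAt (fun q : Pt => q.2.2) C2 p :=
  hasFDerivAt_snd.comp p hasFDerivAt_snd

lemma pd_x1 (α : Fin 3) : pd α (fun q : Pt => q.2.1) p = (dir α).2.1 := by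
  rw [pd, hasFDerivAt_x1.fderiv]; rfl

lemma pd_x2 (α : Fin 3) : pd α (fun q : Pt => q.2.2) p = (dir α).2.2 := by
  rw [pd, hasFDerivAt_x2.fderiv]; rfl

/-- Hyperbolic decomposition of the wave operator for the Klein–Gordon
`L^∞` estimate: `s⁻¹ 𝒟(𝒟(s·w)) = □w + S₁[w]` on `K`. -/
theorem hyperbolic_decomposition (w : Pt → ℝ) (hw : ContDiffOn ℝ 2 w Kset)
    (p : Pt) (hp : p ∈ Kset) :
    (sv p)⁻¹ * calD (calD (fun q => sv q * w q)) p = Box w p + S1op w p := by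
  have ht1 := (Kmem hp).1
  have ht : tc p ≠ 0 := by linarith
  have hs := (sv_pos hp).ne'
  have h2 := sv_sq hp
  have dx1 : DifferentiableAt ℝ (fun q : Pt => q.2.1) p := hasFDerivAt_x1.differentiableAt
  have dx2 : DifferentiableAt ℝ (fun q : Pt => q.2.2) p := hasFDerivAt_x2.differentiableAt
  have hev : calD (fun q => sv q * w q) =ᶠ[nhds p]
      (fun q => w q + (tc q * pd 0 w q + (q.2.1 * pd 1 w q + q.2.2 * pd 2 w q))) := by
    filter_upwards [isOpen_Kset.mem_nhds hp] with q hq using calD_g hw hq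
  have hL : ∀ α : Fin 3, pd α (calD (fun q => sv q * w q)) p
      = pd α w p + ((dir α).1 * pd 0 w p + tc p * pd α (pd 0 w) p
        + ((dir α).2.1 * pd 1 w p + p.2.1 * pd α (pd 1 w) p)
        + ((dir α).2.2 * pd 2 w p + p.2.2 * pd α (pd 2 w) p)) := by
    intro α
    rw [pd_congr hev α,
      pd_add (diff_w hw hp) ((diff_tc.fun_mul (diff_pd hw hp 0)).fun_add
        ((dx1.fun_mul (diff_pd hw hp 1)).fun_add (dx2.fun_mul (diff_pd hw hp 2)))),
      pd_add (diff_tc.fun_mul (diff_pd hw hp 0))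
        ((dx1.fun_mul (diff_pd hw hp 1)).fun_add (dx2.fun_mul (diff_pd hw hp 2))),
      pd_add (dx1.fun_mul (diff_pd hw hp 1)) (dx2.fun_mul (diff_pd hw hp 2)),
      pd_mul diff_tc (diff_pd hw hp 0), pd_mul dx1 (diff_pd hw hp 1),
      pd_mul dx2 (diff_pd hw hp 2), pd_tc, pd_x1, pd_x2]
    ring
  have hpduapp : ∀ (u : Pt → ℝ) (a : Fin 2),
      pdu a u p = (xc a p / tc p) * pd 0 u p + pd a.succ u p := fun u a => rfl
  rw [calD_val _ hp, hL 0, hL 1, hL 2]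
  simp only [S1op, Box, Fin.sum_univ_two]
  rw [hpduapp (pdu 0 w) 0, hpduapp (pdu 1 w) 0, hpduapp (pdu 0 w) 1, hpduapp (pdu 1 w) 1,
    hpduapp w 0, hpduapp w 1]
  simp only [Fin.succ_zero_eq_one, Fin.succ_one_eq_two]
  rw [pd_pdu hw hp 0 0, pd_pdu hw hp 0 1, pd_pdu hw hp 0 2,
    pd_pdu hw hp 1 0, pd_pdu hw hp 1 1, pd_pdu hw hp 1 2]
  simp only [dir0, dir1, dir2, xc, Fin.succ_zero_eq_one, Fin.succ_one_eq_two,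
    if_pos rfl, if_neg (by decide : ¬(1 : Fin 2) = 0), if_true]
  rw [pd_symm hw hp 0 1, pd_symm hw hp 0 2, pd_symm hw hp 1 2]
  rw [← mul_assoc, ← mul_inv, ← sq, h2]
  have hQ : tc p ^ 2 - (p.2.1 ^ 2 + p.2.2 ^ 2) ≠ 0 := by rw [← h2]; exact pow_ne_zero 2 hs
  field_simp
  ring

end main
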